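/- Let T be a Silver tree and f : 2^ℕ × ℕ^ℕ → 2^ℕ a Borel map. Then there is a Silver tree S ⊆ T and a dense Gδ set D ⊆ ℕ^ℕ such that f is continuous on [S] × D. -/

import Mathlib

open List

/-- Initial segment of length `n` of an infinite binary sequence. -/
def seqTake (a : ℕ → Bool) (n : ℕ) : List Bool := List.ofFn (fun i : Fin n => a i)

/-- The shift `σ ∔ a` : flip bits of `a` at positions `i < |σ|` where `σ(i) = 1`
    (addition modulo 2), leave other positions unchanged. -/
def shiftSeq (σ : List Bool) (a : ℕ → Bool) : ℕ → Bool :=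
  fun i => if i < σ.length then xor (σ.getD i false) (a i) else a i

/-- The shift `σ ∔ v` of a finite string `v`. -/
def shiftStr (σ v : List Bool) : List Bool :=
  seqTake (shiftSeq σ (fun i => v.getD i false)) v.length

/-- The equivalence relation `E₀`: the sequences differ in finitely many positions. -/
def E0 (a b : ℕ → Bool) : Prop := {k | a k ≠ b k}.Finite

/-- The set `[T]` of infinite branches of a tree `T ⊆ 2^{<ω}`. -/
def branches (T : Set (List Bool)) : Set (ℕ → Bool) := {a | ∀ n, seqTake a n ∈ T}

/-- The portion `T↾u = {s ∈ T : u ⊆ s ∨ s ⊆ u}`. -/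
def portion (T : Set (List Bool)) (u : List Bool) : Set (List Bool) :=
  {s ∈ T | u <+: s ∨ s <+: u}

/-- A nonempty tree closed under initial segments. -/
def IsTree (T : Set (List Bool)) : Prop :=
  T.Nonempty ∧ ∀ s ∈ T, ∀ t : List Bool, t <+: s → t ∈ T

/-- A perfect tree: a tree in which every node extends to a splitting node. -/
def IsPerfectTree (T : Set (List Bool)) : Prop :=
  IsTree T ∧ ∀ s ∈ T, ∃ t ∈ T, s <+: t ∧ t ++ [false] ∈ T ∧ t ++ [true] ∈ T

/-- `u₀⌢i₀⌢u₁⌢i₁⌢…⌢uₙ⌢iₙ`. -/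
def silverPrefix (u : ℕ → List Bool) (i : ℕ → Bool) : ℕ → List Bool
  | 0 => u 0 ++ [i 0]
  | n+1 => silverPrefix u i n ++ u (n+1) ++ [i (n+1)]

/-- The branch `u₀⌢i₀⌢u₁⌢i₁⌢…` of the Silver tree with strings `uₖ` and bits `iₖ`. -/
def silverBranch (u : ℕ → List Bool) (i : ℕ → Bool) : ℕ → Bool :=
  fun m => (silverPrefix u i m).getD m false

/-- `T` is the Silver tree with defining strings `uₖ`: `T` consists exactly of all
    initial segments of the branches `u₀⌢i₀⌢u₁⌢i₁⌢…`. -/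
def SilverTreeWith (u : ℕ → List Bool) (T : Set (List Bool)) : Prop :=
  T = {s | ∃ i : ℕ → Bool, s = seqTake (silverBranch u i) s.length}

def IsSilver (T : Set (List Bool)) : Prop := ∃ u, SilverTreeWith u T

/-- The splitting levels `hₙ = |u₀|+1+…+|u_{n-1}|+1+|uₙ|` of a Silver tree. -/
def hLevel (u : ℕ → List Bool) (n : ℕ) : ℕ :=
  (∑ k ∈ Finset.range n, ((u k).length + 1)) + (u n).length

/-- `S` n-refines the Silver tree `T` (with strings `uT`): `S ⊆ T` and the first
    `n` defining strings agree. -/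
def RefinesN (uT : ℕ → List Bool) (S T : Set (List Bool)) (n : ℕ) : Prop :=
  S ⊆ T ∧ ∃ uS, SilverTreeWith uS S ∧ ∀ k < n, uS k = uT k

/-- `S` is clopen in `T`: a finite union of portions of `T`. -/
def ClopenIn (S T : Set (List Bool)) : Prop :=
  ∃ F : Finset (List Bool), ↑F ⊆ T ∧ S = ⋃ u ∈ F, portion T u

namespace SilverAux

/-! ### generic cylinders -/

def listOf {α : Type*} (x : ℕ → α) (n : ℕ) : List α := List.ofFn fun i : Fin n => x i

def cyl {α : Type*} (s : List α) (d : α) : Set (ℕ → α) := {x | ∀ m < s.length, x m = s.getD m d}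

theorem length_listOf {α : Type*} (x : ℕ → α) (n : ℕ) : (listOf x n).length = n :=
  List.length_ofFn

theorem getD_listOf {α : Type*} (x : ℕ → α) {n m : ℕ} (h : m < n) (d : α) :
    (listOf x n).getD m d = x m := by
  rw [List.getD_eq_getElem _ _ (by simpa [listOf] using h)]
  simp [listOf]

theorem seqTake_eq_listOf (a : ℕ → Bool) (n : ℕ) : seqTake a n = listOf a n := rfl

theorem mem_cyl_listOf {α : Type*} (x : ℕ → α) (n : ℕ) (d : α) : x ∈ cyl (listOf x n) d := by
  intro m hm
  rw [length_listOf] at hm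
  exact (getD_listOf x hm d).symm

theorem cyl_listOf_eq {α : Type*} (x : ℕ → α) (n : ℕ) (d : α) :
    cyl (listOf x n) d = {y | ∀ m < n, y m = x m} := by
  ext y
  constructor
  · intro hy m hm
    rw [hy m (by rwa [length_listOf]), getD_listOf x hm d]
  · intro hy m hm
    rw [length_listOf] at hm
    rw [hy m hm, getD_listOf x hm d]

theorem getD_prefix {α : Type*} {p q : List α} (h : p <+: q) {m : ℕ} (hm : m < p.length) (d : α) :
    q.getD m d = p.getD m d := by
  obtain ⟨t, rfl⟩ := h
  exact List.getD_append _ _ _ _ hm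

theorem cyl_anti {α : Type*} {p q : List α} (h : p <+: q) (d : α) : cyl q d ⊆ cyl p d := by
  intro y hy m hm
  rw [hy m (lt_of_lt_of_le hm h.length_le), getD_prefix h hm d]

theorem prefix_listOf {α : Type*} {s : List α} {x : ℕ → α} {d : α} (hx : x ∈ cyl s d) {n : ℕ}
    (hn : s.length ≤ n) : s <+: listOf x n := by
  rw [List.prefix_iff_eq_take]
  apply List.ext_getElem
  · simp [length_listOf]; omega
  · intro m h1 h2
    rw [List.getElem_take]
    have hm : m < s.length := h1
    have hm' : m < n := lt_of_lt_of_le hm hn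
    have : (listOf x n)[m]'(by simpa [length_listOf]) = x m := by simp [listOf]
    rw [this]
    rw [← List.getD_eq_getElem s d hm, hx m hm]

theorem listOf_prefix {α : Type*} (x : ℕ → α) {m n : ℕ} (h : m ≤ n) (d : α) :
    listOf x m <+: listOf x n :=
  prefix_listOf (mem_cyl_listOf x m d) (by simpa [length_listOf] using h)

theorem isOpen_cyl {α : Type*} [TopologicalSpace α] [DiscreteTopology α] (s : List α) (d : α) :
    IsOpen (cyl s d) := by
  have : cyl s d = ⋂ m : Fin s.length, (fun x : ℕ → α => x m) ⁻¹' {s.getD m d} := by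
    ext x
    simp only [Set.mem_iInter, Set.mem_preimage, Set.mem_singleton_iff]
    exact ⟨fun h m => h m m.2, fun h m hm => h ⟨m, hm⟩⟩
  rw [this]
  exact isOpen_iInter_of_finite fun m =>
    (continuous_apply (m : ℕ)).isOpen_preimage _ (isOpen_discrete _)

theorem cyl_nhds_basis {α : Type*} [TopologicalSpace α] [DiscreteTopology α] {V : Set (ℕ → α)}
    (hV : IsOpen V) {y : ℕ → α} (hy : y ∈ V) : ∃ n : ℕ, {x : ℕ → α | ∀ m < n, x m = y m} ⊆ V := by
  obtain ⟨I, u, h1, h2⟩ := isOpen_pi_iff.mp hV y hy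
  refine ⟨(I.sup id) + 1, fun x hx => h2 ?_⟩
  intro a ha
  have : x a = y a := hx a (Nat.lt_succ_of_le (Finset.le_sup (f := id) ha))
  rw [this]
  exact (h1 a ha).2

end SilverAux

namespace SilverAux

/-! ### silverPrefix structure -/

theorem hLevel_succ (u : ℕ → List Bool) (t : ℕ) :
    hLevel u (t+1) = hLevel u t + 1 + (u (t+1)).length := by
  simp [hLevel, Finset.sum_range_succ]; omega

theorem hLevel_strictMono (u : ℕ → List Bool) : StrictMono (hLevel u) :=
  strictMono_nat_of_lt_succ fun t => by rw [hLevel_succ]; omega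

theorem le_hLevel (u : ℕ → List Bool) (t : ℕ) : t ≤ hLevel u t :=
  (hLevel_strictMono u).le_apply

theorem lengthPrefix (u : ℕ → List Bool) (i : ℕ → Bool) (t : ℕ) :
    (silverPrefix u i t).length = hLevel u t + 1 := by
  induction t with
  | zero => simp [silverPrefix, hLevel]
  | succ t IH => rw [hLevel_succ]; simp [silverPrefix, IH]; omega

theorem prefix_succ (u : ℕ → List Bool) (i : ℕ → Bool) (t : ℕ) :
    silverPrefix u i t <+: silverPrefix u i (t+1) :=
  ⟨u (t+1) ++ [i (t+1)], by simp [silverPrefix]⟩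

theorem prefix_mono (u : ℕ → List Bool) (i : ℕ → Bool) {m t : ℕ} (h : m ≤ t) :
    silverPrefix u i m <+: silverPrefix u i t := by
  induction t with
  | zero => rw [Nat.le_zero.mp h]
  | succ t IH =>
      rcases Nat.lt_or_ge m (t+1) with h' | h'
      · exact (IH (Nat.lt_succ_iff.mp h')).trans (prefix_succ u i t)
      · rw [le_antisymm h h']

theorem branch_eq_getD {u : ℕ → List Bool} {i : ℕ → Bool} {t m : ℕ}
    (hm : m < (silverPrefix u i t).length) :
    silverBranch u i m = (silverPrefix u i t).getD m false := by
  have hmm : m < (silverPrefix u i m).length := by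
    rw [lengthPrefix]; exact Nat.lt_succ_of_le (le_hLevel u m)
  rcases le_total m t with h | h
  · exact (getD_prefix (prefix_mono u i h) hmm false).symm
  · exact (getD_prefix (prefix_mono u i h) hm false)

theorem prefix_decomp (u : ℕ → List Bool) (i : ℕ → Bool) (t : ℕ) :
    ∃ q, silverPrefix u i t = q ++ u t ++ [i t] ∧
      q.length = ∑ k ∈ Finset.range t, ((u k).length + 1) := by
  cases t with
  | zero => exact ⟨[], by simp [silverPrefix], by simp⟩
  | succ t =>
      refine ⟨silverPrefix u i t, rfl, ?_⟩
      rw [lengthPrefix, Finset.sum_range_succ]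
      simp [hLevel]; omega

theorem silverBranch_hLevel (u : ℕ → List Bool) (i : ℕ → Bool) (t : ℕ) :
    silverBranch u i (hLevel u t) = i t := by
  have hm : hLevel u t < (silverPrefix u i t).length := by rw [lengthPrefix]; omega
  rw [branch_eq_getD hm]
  obtain ⟨q, hq, hql⟩ := prefix_decomp u i t
  have hq2 : q.length + (u t).length = hLevel u t := by simp [hLevel, hql]
  have h3 : (q ++ u t).length = q.length + (u t).length := by simp
  rw [hq, List.getD_append_right _ _ _ _ (by omega)]
  have h4 : hLevel u t - (q ++ u t).length = 0 := by omega
  rw [h4]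
  simp

theorem prefix_getD_indep (u : ℕ → List Bool) (i i' : ℕ → Bool) :
    ∀ t m, m < (silverPrefix u i t).length → (∀ k, hLevel u k ≠ m) →
      (silverPrefix u i t).getD m false = (silverPrefix u i' t).getD m false := by
  intro t
  induction t with
  | zero =>
      intro m hm hk
      have h0 : hLevel u 0 = (u 0).length := by simp [hLevel]
      have hm' : m < (u 0).length := by
        have := hk 0
        simp [silverPrefix] at hm
        omega
      show ((u 0) ++ [i 0]).getD m false = ((u 0) ++ [i' 0]).getD m false
      rw [List.getD_append _ _ _ _ hm', List.getD_append _ _ _ _ hm']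
  | succ t IH =>
      intro m hm hk
      have hlen : (silverPrefix u i t).length = hLevel u t + 1 := lengthPrefix u i t
      have hlen' : (silverPrefix u i' t).length = hLevel u t + 1 := lengthPrefix u i' t
      have hlen2 : (silverPrefix u i (t+1)).length = hLevel u (t+1) + 1 := lengthPrefix u i (t+1)
      rcases Nat.lt_or_ge m (hLevel u t + 1) with h | h
      · have e1 : (silverPrefix u i (t+1)).getD m false = (silverPrefix u i t).getD m false :=
          getD_prefix (prefix_succ u i t) (by omega) false
        have e2 : (silverPrefix u i' (t+1)).getD m false = (silverPrefix u i' t).getD m false :=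
          getD_prefix (prefix_succ u i' t) (by omega) false
        rw [e1, e2, IH m (by omega) hk]
      · have hks := hk (t+1)
        have hs : hLevel u (t+1) = hLevel u t + 1 + (u (t+1)).length := hLevel_succ u t
        have hmu : m < hLevel u t + 1 + (u (t+1)).length := by omega
        show ((silverPrefix u i t ++ u (t+1)) ++ [i (t+1)]).getD m false =
          ((silverPrefix u i' t ++ u (t+1)) ++ [i' (t+1)]).getD m false
        rw [List.getD_append (silverPrefix u i t ++ u (t+1)) [i (t+1)] false m
              (by simp [hlen]; omega),
            List.getD_append (silverPrefix u i' t ++ u (t+1)) [i' (t+1)] false m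
              (by simp [hlen']; omega),
            List.getD_append_right (silverPrefix u i t) (u (t+1)) false m (by omega),
            List.getD_append_right (silverPrefix u i' t) (u (t+1)) false m (by omega),
            hlen, hlen']

theorem silverBranch_indep {u : ℕ → List Bool} {m : ℕ} (h : ∀ k, hLevel u k ≠ m)
    (i i' : ℕ → Bool) : silverBranch u i m = silverBranch u i' m := by
  have hmm : m < (silverPrefix u i m).length := by
    rw [lengthPrefix]; exact Nat.lt_succ_of_le (le_hLevel u m)
  have hmm' : m < (silverPrefix u i' m).length := by
    rw [lengthPrefix]; exact Nat.lt_succ_of_le (le_hLevel u m)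
  calc silverBranch u i m = (silverPrefix u i m).getD m false := rfl
    _ = (silverPrefix u i' m).getD m false := prefix_getD_indep u i i' m m hmm h
    _ = silverBranch u i' m := rfl

end SilverAux

namespace SilverAux

/-! ### seqTake lemmas -/

theorem length_seqTake (a : ℕ → Bool) (n : ℕ) : (seqTake a n).length = n :=
  List.length_ofFn

theorem getD_seqTake (a : ℕ → Bool) {n m : ℕ} (h : m < n) :
    (seqTake a n).getD m false = a m := getD_listOf a h false

theorem seqTake_eq_imp {a b : ℕ → Bool} {n : ℕ} (h : seqTake a n = seqTake b n) :
    ∀ m < n, a m = b m := by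
  intro m hm
  calc a m = (seqTake a n).getD m false := (getD_seqTake a hm).symm
    _ = (seqTake b n).getD m false := by rw [h]
    _ = b m := getD_seqTake b hm

/-! ### mix and stringsOf -/

open Classical in
noncomputable def mix (b : ℕ → Bool) (e : ℕ → ℕ) (i : ℕ → Bool) (m : ℕ) : Bool :=
  if h : ∃ t, e t = m then i h.choose else b m

theorem mix_apply_e {e : ℕ → ℕ} (he : StrictMono e) (b : ℕ → Bool) (i : ℕ → Bool) (t : ℕ) :
    mix b e i (e t) = i t := by
  unfold mix
  rw [dif_pos ⟨t, rfl⟩]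
  congr 1
  exact he.injective (Exists.choose_spec (⟨t, rfl⟩ : ∃ k, e k = e t))

theorem mix_apply_ne {e : ℕ → ℕ} {m : ℕ} (h : ∀ t, e t ≠ m) (b : ℕ → Bool) (i : ℕ → Bool) :
    mix b e i m = b m := by
  unfold mix
  rw [dif_neg (by push_neg; exact fun t => h t)]

noncomputable def stringsOf (b : ℕ → Bool) (e : ℕ → ℕ) : ℕ → List Bool
  | 0 => List.ofFn (fun j : Fin (e 0) => b j)
  | t+1 => List.ofFn (fun j : Fin (e (t+1) - (e t + 1)) => b (e t + 1 + j))

theorem hLevel_stringsOf {e : ℕ → ℕ} (he : StrictMono e) (b : ℕ → Bool) (t : ℕ) :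
    hLevel (stringsOf b e) t = e t := by
  induction t with
  | zero => simp [hLevel, stringsOf]
  | succ t IH =>
      have h1 : e t < e (t+1) := he (Nat.lt_succ_self t)
      rw [hLevel_succ, IH]
      simp [stringsOf]
      omega

theorem stringsOf_getD {b : ℕ → Bool} {e : ℕ → ℕ} {m : ℕ} :
    ∀ {t}, (ht : m < (stringsOf b e t).length) →
      (stringsOf b e t).getD m false = b ((if t = 0 then 0 else e (t-1) + 1) + m) := by
  intro t ht
  cases t with
  | zero =>
      rw [List.getD_eq_getElem _ _ ht]
      simp [stringsOf]
  | succ t =>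
      rw [List.getD_eq_getElem _ _ ht]
      simp [stringsOf]

theorem base_prefix_getD {b : ℕ → Bool} {e : ℕ → ℕ} (he : StrictMono e) (i : ℕ → Bool) :
    ∀ t m, m < (silverPrefix (stringsOf b e) i t).length → (∀ k, e k ≠ m) →
      (silverPrefix (stringsOf b e) i t).getD m false = b m := by
  intro t
  induction t with
  | zero =>
      intro m hm hk
      have hlen0 : (stringsOf b e 0).length = e 0 := by simp [stringsOf]
      have hm' : m < e 0 := by
        have := hk 0
        simp [silverPrefix, hlen0] at hm
        omega
      show ((stringsOf b e 0) ++ [i 0]).getD m false = b m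
      rw [List.getD_append _ _ _ _ (by omega), stringsOf_getD (by omega)]
      simp
  | succ t IH =>
      intro m hm hk
      have hP : (silverPrefix (stringsOf b e) i t).length = e t + 1 := by
        rw [lengthPrefix, hLevel_stringsOf he]
      have hlen : (stringsOf b e (t+1)).length = e (t+1) - (e t + 1) := by simp [stringsOf]
      have hst : e t < e (t+1) := he (Nat.lt_succ_self t)
      rcases Nat.lt_or_ge m (e t + 1) with h | h
      · have e1 : (silverPrefix (stringsOf b e) i (t+1)).getD m false =
            (silverPrefix (stringsOf b e) i t).getD m false :=
          getD_prefix (prefix_succ _ i t) (by omega) false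
        rw [e1, IH m (by omega) hk]
      · have hm2 : m < e (t+1) := by
          have h2 := hk (t+1)
          rw [lengthPrefix, hLevel_stringsOf he] at hm
          omega
        show ((silverPrefix (stringsOf b e) i t ++ stringsOf b e (t+1)) ++ [i (t+1)]).getD m false
          = b m
        rw [List.getD_append _ _ _ _ (by simp [hP, hlen]; omega),
            List.getD_append_right _ _ _ _ (by omega),
            stringsOf_getD (by rw [hlen]; omega)]
        simp [hP]
        congr 1
        omega

theorem silverBranch_stringsOf {e : ℕ → ℕ} (he : StrictMono e) (b : ℕ → Bool) (i : ℕ → Bool) :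
    silverBranch (stringsOf b e) i = mix b e i := by
  funext m
  by_cases h : ∃ t, e t = m
  · obtain ⟨t, rfl⟩ := h
    rw [mix_apply_e he]
    have : e t = hLevel (stringsOf b e) t := (hLevel_stringsOf he b t).symm
    rw [this, silverBranch_hLevel]
  · push_neg at h
    rw [mix_apply_ne h]
    have hmm : m < (silverPrefix (stringsOf b e) i m).length := by
      rw [lengthPrefix]; exact Nat.lt_succ_of_le (le_hLevel _ m)
    calc silverBranch (stringsOf b e) i m
        = (silverPrefix (stringsOf b e) i m).getD m false := rfl
      _ = b m := base_prefix_getD he i m m hmm h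

/-! ### composition -/

theorem comp_eq_mix (v w : ℕ → List Bool) (i : ℕ → Bool) (m : ℕ) :
    silverBranch v (silverBranch w i) m =
      mix (silverBranch v (silverBranch w (fun _ => false)))
        (fun t => hLevel v (hLevel w t)) i m := by
  have he : StrictMono (fun t => hLevel v (hLevel w t)) :=
    (hLevel_strictMono v).comp (hLevel_strictMono w)
  by_cases h : ∃ t, hLevel v (hLevel w t) = m
  · obtain ⟨t, rfl⟩ := h
    rw [mix_apply_e he, silverBranch_hLevel, silverBranch_hLevel]
  · push_neg at h
    rw [mix_apply_ne h]
    by_cases h2 : ∃ k, hLevel v k = m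
    · obtain ⟨k, rfl⟩ := h2
      rw [silverBranch_hLevel, silverBranch_hLevel]
      have hk : ∀ t, hLevel w t ≠ k := fun t ht => h t (by rw [ht])
      exact silverBranch_indep hk i (fun _ => false)
    · push_neg at h2
      exact silverBranch_indep h2 (silverBranch w i) (silverBranch w (fun _ => false))

end SilverAux

namespace SilverAux

theorem branches_silver_sub (U : ℕ → List Bool) {a : ℕ → Bool}
    (ha : a ∈ branches {s | ∃ i, s = seqTake (silverBranch U i) s.length}) :
    ∃ i, a = silverBranch U i := by
  refine ⟨fun t => a (hLevel U t), ?_⟩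
  funext m
  obtain ⟨i', hi'⟩ := ha (m+1)
  rw [length_seqTake] at hi'
  have hpt := seqTake_eq_imp hi'
  by_cases h : ∃ t, hLevel U t = m
  · obtain ⟨t, rfl⟩ := h
    rw [silverBranch_hLevel]
  · push_neg at h
    rw [silverBranch_indep h (fun t => a (hLevel U t)) i']
    exact hpt m (Nat.lt_succ_self m)

/-! ### one-step and multi-step extension -/

theorem oneStep {G : Set ((ℕ → Bool) × (ℕ → ℕ))} (hO : IsOpen G) (hD : Dense G)
    (s : List Bool) (τ : List ℕ) :
    ∃ s' τ', s <+: s' ∧ τ <+: τ' ∧ cyl s' false ×ˢ cyl τ' 0 ⊆ G := by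
  have hne : (cyl s false ×ˢ cyl τ 0 : Set _).Nonempty :=
    ⟨(fun m => s.getD m false, fun m => τ.getD m 0), fun m _ => rfl, fun m _ => rfl⟩
  have hop : IsOpen (cyl s false ×ˢ cyl τ 0) := (isOpen_cyl s false).prod (isOpen_cyl τ 0)
  obtain ⟨p, hp1, hp2⟩ := dense_iff_inter_open.mp hD _ hop hne
  obtain ⟨u, v', hu, hv, hau, hxv, huv⟩ := isOpen_prod_iff.mp hO p.1 p.2 hp2
  obtain ⟨n1, hn1⟩ := cyl_nhds_basis hu hau
  obtain ⟨n2, hn2⟩ := cyl_nhds_basis hv hxv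
  refine ⟨listOf p.1 (max n1 s.length), listOf p.2 (max n2 τ.length),
    prefix_listOf hp1.1 (le_max_right _ _), prefix_listOf hp1.2 (le_max_right _ _), ?_⟩
  intro q hq
  have h1 : q.1 ∈ {x : ℕ → Bool | ∀ m < n1, x m = p.1 m} := by
    have := hq.1
    rw [cyl_listOf_eq] at this
    exact fun m hm => this m (lt_of_lt_of_le hm (le_max_left _ _))
  have h2 : q.2 ∈ {x : ℕ → ℕ | ∀ m < n2, x m = p.2 m} := by
    have := hq.2
    rw [cyl_listOf_eq] at this
    exact fun m hm => this m (lt_of_lt_of_le hm (le_max_left _ _))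
  exact huv ⟨hn1 h1, hn2 h2⟩

theorem multiStep {G : Set ((ℕ → Bool) × (ℕ → ℕ))} (hO : IsOpen G) (hD : Dense G) :
    ∀ (l : List (List Bool)) (τ₀ : List ℕ),
      ∃ (w : List Bool) (τ' : List ℕ), τ₀ <+: τ' ∧
        ∀ s ∈ l, cyl (s ++ w) false ×ˢ cyl τ' 0 ⊆ G := by
  intro l
  induction l with
  | nil => exact fun τ₀ => ⟨[], τ₀, prefix_rfl, by simp⟩
  | cons s l IH =>
      intro τ₀
      obtain ⟨w, τ', hτ, hl⟩ := IH τ₀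
      obtain ⟨s'', τ'', hs'', hτ'', hsub⟩ := oneStep hO hD (s ++ w) τ'
      obtain ⟨t, ht⟩ := hs''
      refine ⟨w ++ t, τ'', hτ.trans hτ'', ?_⟩
      intro s₁ hs₁
      rcases List.mem_cons.mp hs₁ with rfl | hs₁
      · intro q hq
        apply hsub
        have : s₁ ++ (w ++ t) = s'' := by rw [← ht, List.append_assoc]
        exact ⟨this ▸ hq.1, hq.2⟩
      · intro q hq
        apply hl s₁ hs₁
        refine ⟨cyl_anti ⟨t, by rw [List.append_assoc]⟩ false hq.1, cyl_anti hτ'' 0 hq.2⟩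

def allB : ℕ → List (List Bool)
  | 0 => [[]]
  | n+1 => (allB n).map (List.cons false) ++ (allB n).map (List.cons true)

theorem mem_allB : ∀ {n : ℕ} {s : List Bool}, s.length = n → s ∈ allB n := by
  intro n
  induction n with
  | zero => intro s hs; simp [List.length_eq_zero_iff.mp hs, allB]
  | succ n IH =>
      intro s hs
      match s with
      | [] => simp at hs
      | b :: s =>
          have hsl : s.length = n := by simpa using hs
          cases b
          · exact List.mem_append.mpr (Or.inl (List.mem_map.mpr ⟨s, IH hsl, rfl⟩))
          · exact List.mem_append.mpr (Or.inr (List.mem_map.mpr ⟨s, IH hsl, rfl⟩))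

theorem stageStep {G : Set ((ℕ → Bool) × (ℕ → ℕ))} (hO : IsOpen G) (hD : Dense G)
    (L : ℕ) (τ₀ : List ℕ) :
    ∃ (w : List Bool) (τ' : List ℕ), τ₀ <+: τ' ∧
      ∀ s : List Bool, s.length = L → cyl (s ++ w) false ×ˢ cyl τ' 0 ⊆ G := by
  obtain ⟨w, τ', hτ, h⟩ := multiStep hO hD (allB L) τ₀
  exact ⟨w, τ', hτ, fun s hs => h s (mem_allB hs)⟩

end SilverAux

namespace SilverAux

theorem fusion (G : ℕ → Set ((ℕ → Bool) × (ℕ → ℕ))) (hO : ∀ n, IsOpen (G n))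
    (hD : ∀ n, Dense (G n)) :
    ∃ (w : ℕ → List Bool) (D : Set (ℕ → ℕ)), IsGδ D ∧ Dense D ∧
      ∀ (i : ℕ → Bool) (x : ℕ → ℕ), x ∈ D → ∀ n, (silverBranch w i, x) ∈ G n := by
  classical
  choose W Tau hTpre hTsub using fun (n L : ℕ) (τ₀ : List ℕ) => stageStep (hO n) (hD n) L τ₀
  set p : ℕ → ℕ × List ℕ := fun t => Denumerable.ofNat (ℕ × List ℕ) t with hp
  set Lof : List (List Bool) → ℕ := fun l => (l.map (fun s => s.length + 1)).sum with hLof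
  set F : ℕ → List (List Bool) := fun t =>
    Nat.rec [] (fun t prev => prev ++ [W (p t).1 (Lof prev) (p t).2]) t with hF
  set Lt : ℕ → ℕ := fun t => Lof (F t) with hLt
  set w : ℕ → List Bool := fun t => W (p t).1 (Lt t) (p t).2 with hw
  set τt : ℕ → List ℕ := fun t => Tau (p t).1 (Lt t) (p t).2 with hτt
  have hTpre' : ∀ t, (p t).2 <+: τt t := fun t => hTpre _ _ _
  have hTsub' : ∀ t (s : List Bool), s.length = Lt t →
      cyl (s ++ w t) false ×ˢ cyl (τt t) 0 ⊆ G (p t).1 := fun t => hTsub _ _ _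
  have hFs : ∀ t, F (t+1) = F t ++ [w t] := fun t => rfl
  have hLts : ∀ t, Lt (t+1) = Lt t + ((w t).length + 1) := by
    intro t
    rw [hLt]
    simp only [hFs, hLof, List.map_append, List.sum_append]
    simp
  have hLtsum : ∀ t, Lt t = ∑ k ∈ Finset.range t, ((w k).length + 1) := by
    intro t
    induction t with
    | zero => simp [hLt, hF, hLof]
    | succ t IH => rw [hLts, IH, Finset.sum_range_succ]
  have hLtlevel : ∀ t, hLevel w t = Lt t + (w t).length := by
    intro t
    rw [hLevel, hLtsum]
  have hblock : ∀ (i : ℕ → Bool) t m, Lt t ≤ m → m < Lt t + (w t).length →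
      silverBranch w i m = (w t).getD (m - Lt t) false := by
    intro i t m h1 h2
    have hm : m < (silverPrefix w i t).length := by
      rw [lengthPrefix, hLtlevel]; omega
    rw [branch_eq_getD hm]
    obtain ⟨q, hq, hql⟩ := prefix_decomp w i t
    have hql' : q.length = Lt t := by rw [hql, ← hLtsum]
    rw [hq, List.getD_append _ _ _ _ (by simp [hql']; omega),
      List.getD_append_right _ _ _ _ (by omega), hql']
  have hmem : ∀ (i : ℕ → Bool) t,
      silverBranch w i ∈ cyl (seqTake (silverBranch w i) (Lt t) ++ w t) false := by
    intro i t m hm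
    have hlen : (seqTake (silverBranch w i) (Lt t)).length = Lt t := length_seqTake _ _
    rcases Nat.lt_or_ge m (Lt t) with h | h
    · rw [List.getD_append _ _ _ _ (by omega), getD_seqTake _ h]
    · rw [List.getD_append_right _ _ _ _ (by omega), hlen]
      simp only [List.length_append, hlen] at hm
      exact hblock i t m h (by omega)
  refine ⟨w, ⋂ n, ⋃ t, ⋃ (_ : (p t).1 = n), cyl (τt t) 0, ?_, ?_, ?_⟩
  · exact IsGδ.iInter fun n =>
      (isOpen_iUnion fun t => isOpen_iUnion fun _ => isOpen_cyl _ _).isGδ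
  · apply dense_iInter_of_isOpen
    · exact fun n => isOpen_iUnion fun t => isOpen_iUnion fun _ => isOpen_cyl _ _
    · intro n
      rw [dense_iff_inter_open]
      intro Uo hUo hUne
      obtain ⟨x, hx⟩ := hUne
      obtain ⟨n0, hn0⟩ := cyl_nhds_basis hUo hx
      obtain ⟨t, hpt⟩ : ∃ t, p t = (n, listOf x n0) :=
        ⟨Encodable.encode ((n, listOf x n0) : ℕ × List ℕ), by
          rw [hp]; exact Denumerable.ofNat_encode _⟩
      have h1 : (fun m => (τt t).getD m 0) ∈ cyl (τt t) 0 := fun m _ => rfl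
      refine ⟨fun m => (τt t).getD m 0, ?_, ?_⟩
      · apply hn0
        have h2 : cyl (τt t) 0 ⊆ cyl (listOf x n0) 0 := by
          apply cyl_anti
          have := hTpre' t
          rwa [hpt] at this
        have := h2 h1
        rwa [cyl_listOf_eq] at this
      · exact Set.mem_iUnion.mpr ⟨t, Set.mem_iUnion.mpr ⟨by rw [hpt], h1⟩⟩
  · intro i x hx n
    have hxn := Set.mem_iInter.mp hx n
    obtain ⟨t, ht⟩ := Set.mem_iUnion.mp hxn
    obtain ⟨hpt, hxc⟩ := Set.mem_iUnion.mp ht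
    have := hTsub' t (seqTake (silverBranch w i) (Lt t)) (length_seqTake _ _)
      (Set.mk_mem_prod (hmem i t) hxc)
    rwa [hpt] at this

end SilverAux

open SilverAux

theorem borel_continuous_on_silver_times_Gdelta (T : Set (List Bool)) (hT : IsSilver T)
    (f : (ℕ → Bool) × (ℕ → ℕ) → (ℕ → Bool)) (hf : Measurable f) :
    ∃ (S : Set (List Bool)) (D : Set (ℕ → ℕ)),
      IsSilver S ∧ S ⊆ T ∧ IsGδ D ∧ Dense D ∧
        ContinuousOn f (branches S ×ˢ D) := by
  classical
  obtain ⟨v, hv⟩ := hT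
  have hmeas_h : Measurable fun j : ℕ → Bool => silverBranch v j := by
    rw [measurable_pi_iff]
    intro m
    by_cases h : ∃ t, hLevel v t = m
    · obtain ⟨t, rfl⟩ := h
      have heq : (fun j : ℕ → Bool => silverBranch v j (hLevel v t)) = fun j => j t :=
        funext fun j => silverBranch_hLevel v j t
      rw [heq]
      exact measurable_pi_apply t
    · push_neg at h
      have heq : (fun j : ℕ → Bool => silverBranch v j m) =
          fun _ => silverBranch v (fun _ => false) m :=
        funext fun j => silverBranch_indep h j (fun _ => false)
      rw [heq]
      exact measurable_const
  set g : (ℕ → Bool) × (ℕ → ℕ) → ℕ → Bool := fun q => f (silverBranch v q.1, q.2) with hgdef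
  have hgm : Measurable g :=
    hf.comp ((hmeas_h.comp measurable_fst).prodMk measurable_snd)
  choose Uo hUo hAU using fun s : List Bool =>
    (hgm (isOpen_cyl s false).measurableSet).residualEq_isOpen
  have hR : (⋂ s : List Bool, {q | q ∈ g ⁻¹' cyl s false ↔ q ∈ Uo s}) ∈
      residual ((ℕ → Bool) × (ℕ → ℕ)) := by
    rw [countable_iInter_mem]
    intro s
    filter_upwards [hAU s] with q hq
    exact iff_of_eq hq
  obtain ⟨Sf, hSfo, hSfd, hSfc, hSfsub⟩ := mem_residual_iff.mp hR
  obtain ⟨Gs, hGs⟩ := Set.Countable.exists_eq_range (hSfc.insert Set.univ)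
      ⟨Set.univ, Set.mem_insert _ _⟩
  have hGo : ∀ n, IsOpen (Gs n) := by
    intro n
    have : Gs n ∈ insert Set.univ Sf := hGs ▸ Set.mem_range_self n
    rcases Set.mem_insert_iff.mp this with h | h
    · rw [h]; exact isOpen_univ
    · exact hSfo _ h
  have hGd : ∀ n, Dense (Gs n) := by
    intro n
    have : Gs n ∈ insert Set.univ Sf := hGs ▸ Set.mem_range_self n
    rcases Set.mem_insert_iff.mp this with h | h
    · rw [h]; exact dense_univ
    · exact hSfd _ h
  have hGsub : (⋂ n, Gs n) ⊆ ⋂ s : List Bool, {q | q ∈ g ⁻¹' cyl s false ↔ q ∈ Uo s} := by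
    intro q hq
    apply hSfsub
    intro t ht
    have ht' : t ∈ insert Set.univ Sf := Set.mem_insert_of_mem _ ht
    rw [hGs] at ht'
    obtain ⟨n, rfl⟩ := ht'
    exact Set.mem_iInter.mp hq n
  obtain ⟨w, D, hDG, hDd, hGuar⟩ := fusion Gs hGo hGd
  have he : StrictMono (fun t => hLevel v (hLevel w t)) :=
    (hLevel_strictMono v).comp (hLevel_strictMono w)
  set Ustr := stringsOf (silverBranch v (silverBranch w (fun _ => false)))
      (fun t => hLevel v (hLevel w t)) with hUstr
  have hUB : ∀ i, silverBranch Ustr i = silverBranch v (silverBranch w i) := by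
    intro i
    rw [hUstr, silverBranch_stringsOf he]
    exact funext fun m => (comp_eq_mix v w i m).symm
  have hread : ∀ i, (fun k => silverBranch Ustr i (hLevel v k)) = silverBranch w i := by
    intro i
    funext k
    rw [hUB i, silverBranch_hLevel]
  refine ⟨{s : List Bool | ∃ i, s = seqTake (silverBranch Ustr i) s.length}, D,
    ⟨Ustr, rfl⟩, ?_, hDG, hDd, ?_⟩
  · rintro s ⟨i, hs⟩
    rw [hv]
    rw [hUB i] at hs
    exact ⟨silverBranch w i, hs⟩
  · set B0 := Set.range (silverBranch w) with hB0
    have hRq : ∀ q ∈ B0 ×ˢ D, ∀ s : List Bool, q ∈ g ⁻¹' cyl s false ↔ q ∈ Uo s := by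
      rintro ⟨a, x⟩ ⟨⟨i, rfl⟩, hx⟩ s
      have h1 : (silverBranch w i, x) ∈ ⋂ n, Gs n :=
        Set.mem_iInter.mpr fun n => hGuar i x hx n
      exact Set.mem_iInter.mp (hGsub h1) s
    have hgc : ContinuousOn g (B0 ×ˢ D) := by
      intro q hq
      refine tendsto_nhds.mpr ?_
      intro V hV hgV
      obtain ⟨n, hn⟩ := cyl_nhds_basis hV hgV
      have hqA : q ∈ g ⁻¹' cyl (listOf (g q) n) false :=
        Set.mem_preimage.mpr (mem_cyl_listOf (g q) n false)
      have hqU : q ∈ Uo (listOf (g q) n) := (hRq q hq _).mp hqA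
      rw [mem_nhdsWithin]
      refine ⟨Uo _, hUo _, hqU, ?_⟩
      rintro q' ⟨hq'U, hq'set⟩
      have hq'A : q' ∈ g ⁻¹' cyl (listOf (g q) n) false := (hRq q' hq'set _).mpr hq'U
      apply hn
      have h2 := Set.mem_preimage.mp hq'A
      rwa [cyl_listOf_eq] at h2
    have hψ : Continuous fun q : (ℕ → Bool) × (ℕ → ℕ) =>
        ((fun k => q.1 (hLevel v k), q.2) : (ℕ → Bool) × (ℕ → ℕ)) :=
      (continuous_pi fun k => (continuous_apply _).comp continuous_fst).prodMk continuous_snd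
    have hmaps : Set.MapsTo (fun q : (ℕ → Bool) × (ℕ → ℕ) => ((fun k => q.1 (hLevel v k)), q.2))
        (branches {s | ∃ i, s = seqTake (silverBranch Ustr i) s.length} ×ˢ D) (B0 ×ˢ D) := by
      rintro ⟨a, x⟩ ⟨ha, hx⟩
      obtain ⟨i, rfl⟩ := branches_silver_sub Ustr ha
      exact ⟨⟨i, (hread i).symm⟩, hx⟩
    have hcomp := ContinuousOn.comp hgc hψ.continuousOn hmaps
    apply hcomp.congr
    rintro ⟨a, x⟩ ⟨ha, hx⟩
    obtain ⟨i, rfl⟩ := branches_silver_sub Ustr ha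
    show f (silverBranch Ustr i, x) =
      g ((fun k => silverBranch Ustr i (hLevel v k)), x)
    rw [hread i, hgdef]
    simp only
    rw [hUB i]
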